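/- Let d ≥ 1 and let X be the cross-polytope point set on Ω^d consisting of the N = 4d points ±e_j and ±i·e_j for j = 1, …, d, where e_j is the j-th standard basis vector of ℂ^d. Then X is a triangular complex spherical 3-design on Ω^d. -/

import Mathlib

noncomputable section
open MeasureTheory Metric MvPolynomial ENNReal

instance (d : ℕ) : MeasurableSpace (EuclideanSpace ℂ (Fin d)) := borel _
instance (d : ℕ) : BorelSpace (EuclideanSpace ℂ (Fin d)) := ⟨rfl⟩

/-- The complex unit sphere `Ω^d ⊆ ℂ^d`. -/
abbrev CSph (d : ℕ) : Type := Metric.sphere (0 : EuclideanSpace ℂ (Fin d)) 1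

def csMap {d : ℕ} (f : EuclideanSpace ℂ (Fin d) ≃ₗᵢ[ℂ] EuclideanSpace ℂ (Fin d))
    (z : CSph d) : CSph d :=
  ⟨f z, by
    have hz := z.2
    simp only [mem_sphere_iff_norm, sub_zero] at hz ⊢
    simp [hz]⟩

/-- `μ` is the uniform (unitarily invariant) probability measure on `Ω^d`. -/
def IsUniformC {d : ℕ} (μ : Measure (CSph d)) : Prop :=
  IsProbabilityMeasure μ ∧
    ∀ f : EuclideanSpace ℂ (Fin d) ≃ₗᵢ[ℂ] EuclideanSpace ℂ (Fin d),
      Measure.map (csMap f) μ = μ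

/-- Evaluation of `Q ∈ ℂ[u₁,…,u_d,v₁,…,v_d]` at `u_j = z_j`, `v_j = conj (z_j)`. -/
def evalC {d : ℕ} (Q : MvPolynomial (Fin d ⊕ Fin d) ℂ) (z : CSph d) : ℂ :=
  MvPolynomial.eval
    (Sum.elim (fun j => (z : EuclideanSpace ℂ (Fin d)) j)
      (fun j => (starRingEnd ℂ) ((z : EuclideanSpace ℂ (Fin d)) j))) Q

/-- A finite family of points of `Ω^d` is a triangular complex spherical `t`-design. -/
def IsTriDesign {d : ℕ} (μ : Measure (CSph d)) (t : ℕ)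
    {ι : Type} [Fintype ι] (z : ι → CSph d) : Prop :=
  ∀ Q : MvPolynomial (Fin d ⊕ Fin d) ℂ, Q.totalDegree ≤ t →
    (Fintype.card ι : ℂ)⁻¹ * ∑ i, evalC Q (z i) = ∫ w, evalC Q w ∂μ

/-- the cross-polytope points `±e_j, ±i·e_j` on `Ω^d` -/
def crossPt (d : ℕ) (j : Fin d) (k : Fin 4) : CSph d :=
  ⟨(![1, -1, Complex.I, -Complex.I] k) • EuclideanSpace.single j (1 : ℂ), by
    simp only [mem_sphere_iff_norm, sub_zero, norm_smul, EuclideanSpace.norm_single]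
    fin_cases k <;> simp⟩

/-! ### Auxiliary lemmas -/

variable {d : ℕ}

lemma continuous_coordC (j : Fin d) :
    Continuous fun z : CSph d => (z : EuclideanSpace ℂ (Fin d)) j :=
  (continuous_apply j).comp ((PiLp.continuous_ofLp 2 _).comp continuous_subtype_val)

lemma continuous_evalC (Q : MvPolynomial (Fin d ⊕ Fin d) ℂ) :
    Continuous (evalC Q) := by
  have hσ : ∀ s : Fin d ⊕ Fin d, Continuous fun z : CSph d =>
      Sum.elim (fun j => (z : EuclideanSpace ℂ (Fin d)) j)
        (fun j => (starRingEnd ℂ) ((z : EuclideanSpace ℂ (Fin d)) j)) s := by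
    rintro (j | j)
    · exact continuous_coordC j
    · exact Complex.continuous_conj.comp (continuous_coordC j)
  induction Q using MvPolynomial.induction_on with
  | C a =>
      have : evalC (C a : MvPolynomial (Fin d ⊕ Fin d) ℂ) = fun _ : CSph d => a := by
        funext z; simp [evalC]
      rw [this]; exact continuous_const
  | add p q hp hq =>
      have : evalC (p + q) = fun z => evalC p z + evalC q z := by
        funext z; simp [evalC]
      rw [this]; exact hp.add hq
  | mul_X p i hp =>
      have : evalC (p * X i) = fun z =>
          evalC p z * Sum.elim (fun j => (z : EuclideanSpace ℂ (Fin d)) j)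
            (fun j => (starRingEnd ℂ) ((z : EuclideanSpace ℂ (Fin d)) j)) i := by
        funext z; simp [evalC]
      rw [this]; exact hp.mul (hσ i)

lemma integrable_evalC (μ : Measure (CSph d)) [IsProbabilityMeasure μ]
    (Q : MvPolynomial (Fin d ⊕ Fin d) ℂ) : Integrable (evalC Q) μ :=
  (continuous_evalC Q).integrable_of_hasCompactSupport (HasCompactSupport.of_compactSpace _)

/-- diagonal unitary isometry -/
def diagIso (u : Fin d → ℂ) (hu : ∀ j, ‖u j‖ = 1) :
    EuclideanSpace ℂ (Fin d) ≃ₗᵢ[ℂ] EuclideanSpace ℂ (Fin d) where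
  toFun z := WithLp.toLp 2 (fun j => u j * z j)
  invFun z := WithLp.toLp 2 (fun j => (starRingEnd ℂ) (u j) * z j)
  left_inv z := by
    ext j
    have h1 : (starRingEnd ℂ) (u j) * u j = 1 := by
      rw [mul_comm, Complex.mul_conj, Complex.normSq_eq_norm_sq, hu j]
      norm_num
    show (starRingEnd ℂ) (u j) * (u j * z j) = z j
    rw [← mul_assoc, h1, one_mul]
  right_inv z := by
    ext j
    have h1 : u j * (starRingEnd ℂ) (u j) = 1 := by
      rw [Complex.mul_conj, Complex.normSq_eq_norm_sq, hu j]
      norm_num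
    show u j * ((starRingEnd ℂ) (u j) * z j) = z j
    rw [← mul_assoc, h1, one_mul]
  map_add' z w := by ext j; show u j * (z j + w j) = u j * z j + u j * w j; ring
  map_smul' c z := by
    ext j
    show u j * (c * z j) = c * (u j * z j)
    ring
  norm_map' z := by
    rw [EuclideanSpace.norm_eq, EuclideanSpace.norm_eq]
    congr 1
    refine Finset.sum_congr rfl fun j _ => ?_
    show ‖u j * z j‖ ^ 2 = ‖z j‖ ^ 2
    rw [norm_mul, hu j, one_mul]

def swapIso (j j' : Fin d) : EuclideanSpace ℂ (Fin d) ≃ₗᵢ[ℂ] EuclideanSpace ℂ (Fin d) :=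
  LinearIsometryEquiv.piLpCongrLeft 2 ℂ ℂ (Equiv.swap j j')

lemma swapIso_apply (j j' : Fin d) (z : EuclideanSpace ℂ (Fin d)) (i : Fin d) :
    swapIso j j' z i = z (Equiv.swap j j' i) := rfl

lemma continuous_csMap (f : EuclideanSpace ℂ (Fin d) ≃ₗᵢ[ℂ] EuclideanSpace ℂ (Fin d)) :
    Continuous (csMap f) :=
  Continuous.subtype_mk (f.continuous.comp continuous_subtype_val) _

lemma integral_comp_csMap {μ : Measure (CSph d)}
    (hμ : ∀ f : EuclideanSpace ℂ (Fin d) ≃ₗᵢ[ℂ] EuclideanSpace ℂ (Fin d),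
      Measure.map (csMap f) μ = μ)
    (f : EuclideanSpace ℂ (Fin d) ≃ₗᵢ[ℂ] EuclideanSpace ℂ (Fin d))
    (g : CSph d → ℂ) (hg : Continuous g) :
    ∫ w, g (csMap f w) ∂μ = ∫ w, g w ∂μ := by
  conv_rhs => rw [← hμ f]
  rw [integral_map (continuous_csMap f).aemeasurable hg.aestronglyMeasurable]

lemma evalC_monomial (v : (Fin d ⊕ Fin d) →₀ ℕ) (z : CSph d) :
    evalC (monomial v 1) z =
      ∏ j : Fin d, ((z : EuclideanSpace ℂ (Fin d)) j ^ v (Sum.inl j) *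
        (starRingEnd ℂ) ((z : EuclideanSpace ℂ (Fin d)) j) ^ v (Sum.inr j)) := by
  simp [evalC, eval_monomial, Finsupp.prod_pow, Fintype.prod_sum_type,
    ← Finset.prod_mul_distrib]

lemma crossPt_coord (j : Fin d) (k : Fin 4) (j' : Fin d) :
    ((crossPt d j k : CSph d) : EuclideanSpace ℂ (Fin d)) j' =
      if j' = j then ![1, -1, Complex.I, -Complex.I] k else 0 := by
  show ((![1, -1, Complex.I, -Complex.I] k) • EuclideanSpace.single j (1 : ℂ)) j' = _
  rw [PiLp.smul_apply, EuclideanSpace.single_apply]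
  split <;> simp

lemma evalC_monomial_crossPt (v : (Fin d ⊕ Fin d) →₀ ℕ) (j : Fin d) (k : Fin 4) :
    evalC (monomial v 1) (crossPt d j k) =
      ∏ j' : Fin d, ((if j' = j then ![1, -1, Complex.I, -Complex.I] k else 0) ^ v (Sum.inl j') *
        (if j' = j then (starRingEnd ℂ) (![1, -1, Complex.I, -Complex.I] k) else 0)
          ^ v (Sum.inr j')) := by
  rw [evalC_monomial]
  refine Finset.prod_congr rfl fun j' _ => ?_
  rw [crossPt_coord, apply_ite (starRingEnd ℂ), map_zero]

lemma sum4_ne (m n : ℕ) (hmn : m + n ≤ 3) (h : m ≠ n) :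
    ∑ k : Fin 4, (![1, -1, Complex.I, -Complex.I] k) ^ m *
      (starRingEnd ℂ) (![1, -1, Complex.I, -Complex.I] k) ^ n = 0 := by
  have hm : m ≤ 3 := le_trans (Nat.le_add_right _ _) hmn
  have hn : n ≤ 3 := le_trans (Nat.le_add_left _ _) hmn
  interval_cases m <;> interval_cases n <;> first
  | omega
  | (simp only [Fin.sum_univ_four]
     norm_num [Complex.conj_I, pow_succ]
     try ring_nf
     try simp [Complex.I_sq]
     try ring_nf
     try (rw [show Complex.I ^ 3 = -Complex.I by rw [pow_succ, Complex.I_sq]; ring]; ring))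

lemma sum4_eq : ∑ k : Fin 4, (![1, -1, Complex.I, -Complex.I] k) *
      (starRingEnd ℂ) (![1, -1, Complex.I, -Complex.I] k) = 4 := by
  simp only [Fin.sum_univ_four]
  norm_num [Complex.conj_I]
  try ring_nf
  try simp [Complex.I_sq]
  try ring_nf

lemma finsuppSum_eq (v : (Fin d ⊕ Fin d) →₀ ℕ) :
    (v.sum fun _ e => e) = ∑ s : Fin d ⊕ Fin d, v s :=
  Finsupp.sum_fintype _ _ fun _ => rfl

lemma pair_le (v : (Fin d ⊕ Fin d) →₀ ℕ) (j : Fin d) :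
    v (Sum.inl j) + v (Sum.inr j) ≤ v.sum fun _ e => e := by
  rw [finsuppSum_eq]
  have h := Finset.sum_le_sum_of_subset
    (Finset.subset_univ ({Sum.inl j, Sum.inr j} : Finset (Fin d ⊕ Fin d))) (f := fun s => v s)
  rwa [Finset.sum_pair (by simp)] at h

lemma classify (v : (Fin d ⊕ Fin d) →₀ ℕ) (hv : (v.sum fun _ e => e) ≤ 3) :
    v = 0 ∨ (∃ j, v (Sum.inl j) ≠ v (Sum.inr j)) ∨
      ∃ j, v = Finsupp.single (Sum.inl j) 1 + Finsupp.single (Sum.inr j) 1 := by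
  by_cases h0 : v = 0
  · exact Or.inl h0
  by_cases hne : ∃ j, v (Sum.inl j) ≠ v (Sum.inr j)
  · exact Or.inr (Or.inl hne)
  push_neg at hne
  refine Or.inr (Or.inr ?_)
  have hS : ∑ j : Fin d, v (Sum.inl j) ≤ 1 := by
    rw [finsuppSum_eq, Fintype.sum_sum_type] at hv
    have heq : ∑ j : Fin d, v (Sum.inr j) = ∑ j : Fin d, v (Sum.inl j) :=
      Finset.sum_congr rfl fun j _ => (hne j).symm
    omega
  obtain ⟨j, hj⟩ : ∃ j, v (Sum.inl j) ≠ 0 := by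
    by_contra h
    push_neg at h
    apply h0
    ext s
    rcases s with j | j
    · exact h j
    · rw [← hne j]; exact h j
  have h1 : v (Sum.inl j) = 1 :=
    le_antisymm (le_trans (Finset.single_le_sum (f := fun i => v (Sum.inl i))
      (fun _ _ => Nat.zero_le _) (Finset.mem_univ j)) hS) (Nat.one_le_iff_ne_zero.2 hj)
  have hother : ∀ j', j' ≠ j → v (Sum.inl j') = 0 := by
    intro j' hj'
    by_contra h'
    have hle : v (Sum.inl j) + v (Sum.inl j') ≤ ∑ i : Fin d, v (Sum.inl i) := by
      have h := Finset.sum_le_sum_of_subset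
        (Finset.subset_univ ({j, j'} : Finset (Fin d))) (f := fun i => v (Sum.inl i))
      rwa [Finset.sum_pair (Ne.symm hj')] at h
    omega
  refine ⟨j, ?_⟩
  ext s
  rcases s with j' | j'
  · by_cases hjj : j' = j
    · subst hjj; simp [Finsupp.single_apply, h1]
    · have hnj : ¬ j = j' := fun h => hjj h.symm
      simp [Finsupp.single_apply, hother j' hjj, hnj]
  · by_cases hjj : j' = j
    · subst hjj; simp [Finsupp.single_apply, ← hne j', h1]
    · have hnj : ¬ j = j' := fun h => hjj h.symm
      simp [Finsupp.single_apply, ← hne j', hother j' hjj, hnj]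

lemma sum_crossPt_ne (v : (Fin d ⊕ Fin d) →₀ ℕ) (hv : (v.sum fun _ e => e) ≤ 3)
    (j₀ : Fin d) (hj₀ : v (Sum.inl j₀) ≠ v (Sum.inr j₀)) :
    ∑ p : Fin d × Fin 4, evalC (monomial v 1) (crossPt d p.1 p.2) = 0 := by
  rw [Fintype.sum_prod_type]
  refine Finset.sum_eq_zero fun j _ => ?_
  by_cases hcon : ∀ j', j' ≠ j → v (Sum.inl j') = 0 ∧ v (Sum.inr j') = 0
  · have hjj : j₀ = j := by
      by_contra h
      obtain ⟨h1, h2⟩ := hcon j₀ h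
      exact hj₀ (by rw [h1, h2])
    subst hjj
    have hterm : ∀ k, evalC (monomial v 1) (crossPt d j₀ k) =
        (![1, -1, Complex.I, -Complex.I] k) ^ v (Sum.inl j₀) *
          (starRingEnd ℂ) (![1, -1, Complex.I, -Complex.I] k) ^ v (Sum.inr j₀) := by
      intro k
      rw [evalC_monomial_crossPt]
      rw [Finset.prod_eq_single j₀ (fun j' _ hj' => ?_) (by simp)]
      · simp
      · obtain ⟨h1, h2⟩ := hcon j' hj'
        simp [if_neg hj', h1, h2]
    simp_rw [hterm]
    exact sum4_ne _ _ (le_trans (pair_le v j₀) hv) hj₀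
  · push_neg at hcon
    obtain ⟨j', hj', hvj'⟩ := hcon
    refine Finset.sum_eq_zero fun k _ => ?_
    rw [evalC_monomial_crossPt]
    refine Finset.prod_eq_zero (Finset.mem_univ j') ?_
    simp only [if_neg hj']
    rcases Nat.eq_zero_or_pos (v (Sum.inl j')) with h | h
    · rw [h, pow_zero, one_mul, zero_pow (hvj' h)]
    · rw [zero_pow (Nat.pos_iff_ne_zero.mp h), zero_mul]

lemma pairv_inl (j₀ j' : Fin d) :
    (Finsupp.single (Sum.inl j₀) 1 + Finsupp.single (Sum.inr j₀) 1 :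
      (Fin d ⊕ Fin d) →₀ ℕ) (Sum.inl j') = if j' = j₀ then 1 else 0 := by
  simp [Finsupp.single_apply, eq_comm]

lemma pairv_inr (j₀ j' : Fin d) :
    (Finsupp.single (Sum.inl j₀) 1 + Finsupp.single (Sum.inr j₀) 1 :
      (Fin d ⊕ Fin d) →₀ ℕ) (Sum.inr j') = if j' = j₀ then 1 else 0 := by
  simp [Finsupp.single_apply, eq_comm]

lemma evalC_pair (j₀ : Fin d) (w : CSph d) :
    evalC (monomial (Finsupp.single (Sum.inl j₀) 1 + Finsupp.single (Sum.inr j₀) 1) 1) w =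
      (w : EuclideanSpace ℂ (Fin d)) j₀ *
        (starRingEnd ℂ) ((w : EuclideanSpace ℂ (Fin d)) j₀) := by
  rw [evalC_monomial]
  rw [Finset.prod_eq_single j₀ (fun j' _ hj' => ?_) (by simp)]
  · simp [pairv_inl, pairv_inr]
  · simp [pairv_inl, pairv_inr, hj']

lemma sum_crossPt_pair (j₀ : Fin d) :
    ∑ p : Fin d × Fin 4, evalC
      (monomial (Finsupp.single (Sum.inl j₀) 1 + Finsupp.single (Sum.inr j₀) 1) 1)
      (crossPt d p.1 p.2) = 4 := by
  rw [Fintype.sum_prod_type]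
  rw [Finset.sum_eq_single j₀ (fun j _ hj => ?_) (by simp)]
  · have hterm : ∀ k, evalC
        (monomial (Finsupp.single (Sum.inl j₀) 1 + Finsupp.single (Sum.inr j₀) 1) 1)
        (crossPt d j₀ k) =
        (![1, -1, Complex.I, -Complex.I] k) *
          (starRingEnd ℂ) (![1, -1, Complex.I, -Complex.I] k) := by
      intro k
      rw [evalC_monomial_crossPt]
      rw [Finset.prod_eq_single j₀ (fun j' _ hj' => ?_) (by simp)]
      · simp [pairv_inl, pairv_inr]
      · simp [pairv_inl, pairv_inr, hj']
    simp_rw [hterm]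
    exact sum4_eq
  · refine Finset.sum_eq_zero fun k _ => ?_
    rw [evalC_monomial_crossPt]
    refine Finset.prod_eq_zero (Finset.mem_univ j₀) ?_
    have hnj : j₀ ≠ j := Ne.symm hj
    simp [pairv_inl, pairv_inr, hnj]

lemma integral_monomial_ne (μ : Measure (CSph d)) (hμ : IsUniformC μ)
    (v : (Fin d ⊕ Fin d) →₀ ℕ) (hv : (v.sum fun _ e => e) ≤ 3)
    (j₀ : Fin d) (hj₀ : v (Sum.inl j₀) ≠ v (Sum.inr j₀)) :
    ∫ w, evalC (monomial v 1) w ∂μ = 0 := by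
  set ω : ℂ := Complex.exp Complex.I with hωdef
  have hω : ‖ω‖ = 1 := by
    simp [hωdef, Complex.norm_exp]
  set u : Fin d → ℂ := fun i => if i = j₀ then ω else 1 with hudef
  have hu : ∀ i, ‖u i‖ = 1 := by
    intro i
    by_cases h : i = j₀ <;> simp [hudef, h, hω]
  set f := diagIso u hu with hfdef
  set e : ℂ := ω ^ v (Sum.inl j₀) * (starRingEnd ℂ) ω ^ v (Sum.inr j₀) with hedef
  have hcomp : ∀ w : CSph d, evalC (monomial v 1) (csMap f w) =
      e * evalC (monomial v 1) w := by
    intro w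
    rw [evalC_monomial, evalC_monomial]
    have hcoord : ∀ i : Fin d, ((csMap f w : CSph d) : EuclideanSpace ℂ (Fin d)) i =
        u i * (w : EuclideanSpace ℂ (Fin d)) i := fun i => rfl
    calc ∏ i : Fin d, (((csMap f w : CSph d) : EuclideanSpace ℂ (Fin d)) i ^ v (Sum.inl i) *
            (starRingEnd ℂ) (((csMap f w : CSph d) : EuclideanSpace ℂ (Fin d)) i)
              ^ v (Sum.inr i))
        = ∏ i : Fin d, ((u i ^ v (Sum.inl i) * (starRingEnd ℂ) (u i) ^ v (Sum.inr i)) *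
            ((w : EuclideanSpace ℂ (Fin d)) i ^ v (Sum.inl i) *
              (starRingEnd ℂ) ((w : EuclideanSpace ℂ (Fin d)) i) ^ v (Sum.inr i))) := by
          refine Finset.prod_congr rfl fun i _ => ?_
          rw [hcoord, map_mul, mul_pow, mul_pow]
          ring
      _ = (∏ i : Fin d, (u i ^ v (Sum.inl i) * (starRingEnd ℂ) (u i) ^ v (Sum.inr i))) *
            ∏ i : Fin d, ((w : EuclideanSpace ℂ (Fin d)) i ^ v (Sum.inl i) *
              (starRingEnd ℂ) ((w : EuclideanSpace ℂ (Fin d)) i) ^ v (Sum.inr i)) :=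
          Finset.prod_mul_distrib
      _ = e * ∏ i : Fin d, ((w : EuclideanSpace ℂ (Fin d)) i ^ v (Sum.inl i) *
              (starRingEnd ℂ) ((w : EuclideanSpace ℂ (Fin d)) i) ^ v (Sum.inr i)) := by
          congr 1
          rw [Finset.prod_eq_single j₀ (fun i _ hi => by simp [hudef, if_neg hi]) (by simp)]
          simp [hudef, hedef]
  have hinv := integral_comp_csMap hμ.2 f (evalC (monomial v 1)) (continuous_evalC _)
  simp_rw [hcomp] at hinv
  rw [integral_const_mul] at hinv
  have he : e ≠ 1 := by
    have heexp : e = Complex.exp ((((v (Sum.inl j₀) : ℝ) - (v (Sum.inr j₀) : ℝ)) : ℂ)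
        * Complex.I) := by
      rw [hedef, hωdef, ← Complex.exp_conj, Complex.conj_I, ← Complex.exp_nat_mul,
        ← Complex.exp_nat_mul, ← Complex.exp_add]
      congr 1
      push_cast
      ring
    rw [heexp]
    intro hone
    rw [Complex.exp_eq_one_iff] at hone
    obtain ⟨k, hk⟩ := hone
    have hk' : (((v (Sum.inl j₀) : ℝ) - (v (Sum.inr j₀) : ℝ)) : ℂ) =
        (k : ℂ) * (2 * (Real.pi : ℂ)) := by
      have h2 : (k : ℂ) * (2 * ↑Real.pi * Complex.I) =
          ((k : ℂ) * (2 * (Real.pi : ℂ))) * Complex.I := by ring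
      rw [h2] at hk
      exact mul_right_cancel₀ Complex.I_ne_zero hk
    have hre : ((v (Sum.inl j₀) : ℝ) - (v (Sum.inr j₀) : ℝ)) = (k : ℝ) * (2 * Real.pi) := by
      exact_mod_cast hk'
    have hπ := Real.pi_gt_three
    have hmn : v (Sum.inl j₀) + v (Sum.inr j₀) ≤ 3 := le_trans (pair_le v j₀) hv
    rcases eq_or_ne k 0 with hk0 | hk0
    · rw [hk0] at hre
      have hre' : (v (Sum.inl j₀) : ℝ) = (v (Sum.inr j₀) : ℝ) := by
        push_cast at hre
        linarith
      exact hj₀ (by exact_mod_cast hre')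
    · have habsk : (1 : ℝ) ≤ |(k : ℝ)| := by
        have h3 : (1 : ℤ) ≤ |k| := Int.one_le_abs hk0
        exact_mod_cast h3
      have h1 : |(v (Sum.inl j₀) : ℝ) - (v (Sum.inr j₀) : ℝ)| ≤ 3 := by
        have hm3 : (v (Sum.inl j₀) : ℝ) ≤ 3 := by
          exact_mod_cast le_trans (Nat.le_add_right _ _) hmn
        have hn3 : (v (Sum.inr j₀) : ℝ) ≤ 3 := by
          exact_mod_cast le_trans (Nat.le_add_left _ _) hmn
        have h0m : (0 : ℝ) ≤ (v (Sum.inl j₀) : ℝ) := Nat.cast_nonneg _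
        have h0n : (0 : ℝ) ≤ (v (Sum.inr j₀) : ℝ) := Nat.cast_nonneg _
        rw [abs_le]
        constructor <;> linarith
      rw [hre, abs_mul, abs_mul] at h1
      have h2 : |(2 : ℝ)| = 2 := by norm_num
      have hπabs : |Real.pi| = Real.pi := abs_of_pos Real.pi_pos
      rw [h2, hπabs] at h1
      nlinarith
  rcases eq_or_ne (∫ w, evalC (monomial v 1) w ∂μ) 0 with h | h
  · exact h
  · exact absurd (mul_right_cancel₀ h (by rw [hinv, one_mul])) he

lemma integral_pairC (μ : Measure (CSph d)) (hμ : IsUniformC μ) (j₀ : Fin d) :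
    ∫ w, evalC (monomial (Finsupp.single (Sum.inl j₀) 1 +
      Finsupp.single (Sum.inr j₀) 1) 1) w ∂μ = (d : ℂ)⁻¹ := by
  haveI := hμ.1
  have hd0 : (d : ℂ) ≠ 0 := by
    have hd : 0 < d := j₀.pos
    exact_mod_cast Nat.pos_iff_ne_zero.mp hd
  have hswap : ∀ j : Fin d, ∫ w, evalC (monomial (Finsupp.single (Sum.inl j₀) 1 +
      Finsupp.single (Sum.inr j₀) 1) 1) w ∂μ =
      ∫ w, evalC (monomial (Finsupp.single (Sum.inl j) 1 +
        Finsupp.single (Sum.inr j) 1) 1) w ∂μ := by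
    intro j
    have hinv := integral_comp_csMap hμ.2 (swapIso j₀ j)
      (evalC (monomial (Finsupp.single (Sum.inl j₀) 1 + Finsupp.single (Sum.inr j₀) 1) 1))
      (continuous_evalC _)
    rw [← hinv]
    refine integral_congr_ae (Filter.EventuallyEq.of_eq (funext fun w => ?_))
    rw [evalC_pair, evalC_pair]
    have hc : ((csMap (swapIso j₀ j) w : CSph d) : EuclideanSpace ℂ (Fin d)) j₀ =
        (w : EuclideanSpace ℂ (Fin d)) j := by
      show swapIso j₀ j (w : EuclideanSpace ℂ (Fin d)) j₀ = _
      rw [swapIso_apply, Equiv.swap_apply_left]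
    rw [hc]
  have hnorm : ∀ w : CSph d, ∑ j : Fin d, evalC (monomial (Finsupp.single (Sum.inl j) 1 +
      Finsupp.single (Sum.inr j) 1) 1) w = 1 := by
    intro w
    have h1 : ‖(w : EuclideanSpace ℂ (Fin d))‖ = 1 := by
      have := w.2
      rwa [mem_sphere_iff_norm, sub_zero] at this
    rw [EuclideanSpace.norm_eq] at h1
    have h2 : ∑ j : Fin d, ‖(w : EuclideanSpace ℂ (Fin d)) j‖ ^ 2 = 1 := by
      have := congrArg (· ^ 2) h1
      simpa [Real.sq_sqrt (Finset.sum_nonneg fun j _ => sq_nonneg _)] using this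
    calc ∑ j : Fin d, evalC (monomial (Finsupp.single (Sum.inl j) 1 +
          Finsupp.single (Sum.inr j) 1) 1) w
        = ∑ j : Fin d, ((Complex.normSq ((w : EuclideanSpace ℂ (Fin d)) j) : ℝ) : ℂ) := by
          refine Finset.sum_congr rfl fun j _ => ?_
          rw [evalC_pair, Complex.mul_conj]
      _ = ((∑ j : Fin d, Complex.normSq ((w : EuclideanSpace ℂ (Fin d)) j) : ℝ) : ℂ) := by
          push_cast; rfl
      _ = 1 := by
          have h3 : ∑ j : Fin d, Complex.normSq ((w : EuclideanSpace ℂ (Fin d)) j) = 1 := by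
            have h4 : ∑ j : Fin d, Complex.normSq ((w : EuclideanSpace ℂ (Fin d)) j) =
                ∑ j : Fin d, ‖(w : EuclideanSpace ℂ (Fin d)) j‖ ^ 2 :=
              Finset.sum_congr rfl fun j _ => by rw [← Complex.sq_norm]
            rw [h4, h2]
          rw [h3]; norm_num
  have hsumint : ∑ j : Fin d, ∫ w, evalC (monomial (Finsupp.single (Sum.inl j) 1 +
      Finsupp.single (Sum.inr j) 1) 1) w ∂μ = 1 := by
    rw [← integral_finset_sum _ (fun j _ => integrable_evalC μ _)]
    simp_rw [hnorm]
    simp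
  have hmul : (d : ℂ) * ∫ w, evalC (monomial (Finsupp.single (Sum.inl j₀) 1 +
      Finsupp.single (Sum.inr j₀) 1) 1) w ∂μ = 1 := by
    have h5 : ∑ j : Fin d, ∫ w, evalC (monomial (Finsupp.single (Sum.inl j) 1 +
        Finsupp.single (Sum.inr j) 1) 1) w ∂μ =
        (d : ℂ) * ∫ w, evalC (monomial (Finsupp.single (Sum.inl j₀) 1 +
          Finsupp.single (Sum.inr j₀) 1) 1) w ∂μ := by
      rw [Finset.sum_congr rfl fun j _ => (hswap j).symm, Finset.sum_const,
        Finset.card_univ, Fintype.card_fin, nsmul_eq_mul]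
    rw [← h5]
    exact hsumint
  exact eq_inv_of_mul_eq_one_left (by rw [mul_comm]; exact hmul)

lemma key_monomial (hd : 1 ≤ d) (μ : Measure (CSph d)) (hμ : IsUniformC μ)
    (v : (Fin d ⊕ Fin d) →₀ ℕ) (hv : (v.sum fun _ e => e) ≤ 3) :
    (Fintype.card (Fin d × Fin 4) : ℂ)⁻¹ *
      ∑ p : Fin d × Fin 4, evalC (monomial v 1) (crossPt d p.1 p.2) =
      ∫ w, evalC (monomial v 1) w ∂μ := by
  haveI := hμ.1
  have hd0 : (d : ℂ) ≠ 0 := by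
    exact_mod_cast Nat.pos_iff_ne_zero.mp hd
  have hcard : (Fintype.card (Fin d × Fin 4) : ℂ) = 4 * (d : ℂ) := by
    simp [Fintype.card_prod]
    ring
  rcases classify v hv with h0 | ⟨j₀, hj₀⟩ | ⟨j₀, hpair⟩
  · subst h0
    have h1 : ∀ z : CSph d, evalC (monomial (0 : (Fin d ⊕ Fin d) →₀ ℕ) 1) z = 1 := by
      intro z; simp [evalC, eval_monomial]
    simp_rw [h1]
    have hN : (Fintype.card (Fin d × Fin 4) : ℂ) ≠ 0 := by
      rw [hcard]
      exact mul_ne_zero (by norm_num) hd0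
    rw [Finset.sum_const, Finset.card_univ, integral_const, nsmul_eq_mul, mul_one,
      inv_mul_cancel₀ hN]
    simp [measure_univ]
  · rw [sum_crossPt_ne v hv j₀ hj₀, integral_monomial_ne μ hμ v hv j₀ hj₀, mul_zero]
  · subst hpair
    rw [sum_crossPt_pair j₀, integral_pairC μ hμ j₀, hcard]
    field_simp
    try ring


/-- the cross-polytope `±e_j, ±i·e_j` is a triangular complex spherical
`3`-design on `Ω^d` (with `4d = Fintype.card (Fin d × Fin 4)` points). -/
theorem crossPolytope_is_three_design (d : ℕ) (hd : 1 ≤ d)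
    (μ : Measure (CSph d)) (hμ : IsUniformC μ) :
    IsTriDesign μ 3 (fun p : Fin d × Fin 4 => crossPt d p.1 p.2) := by
  intro Q hQ
  haveI := hμ.1
  have hdec : ∀ z : CSph d, evalC Q z =
      ∑ v ∈ Q.support, coeff v Q * evalC (monomial v 1) z := by
    intro z
    conv_lhs => rw [Q.as_sum]
    simp only [evalC, map_sum, eval_monomial, one_mul]
  calc (Fintype.card (Fin d × Fin 4) : ℂ)⁻¹ *
        ∑ p : Fin d × Fin 4, evalC Q (crossPt d p.1 p.2)
      = ∑ v ∈ Q.support, coeff v Q * ((Fintype.card (Fin d × Fin 4) : ℂ)⁻¹ *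
          ∑ p : Fin d × Fin 4, evalC (monomial v 1) (crossPt d p.1 p.2)) := by
        simp_rw [hdec]
        rw [Finset.sum_comm, Finset.mul_sum]
        refine Finset.sum_congr rfl fun v _ => ?_
        rw [← Finset.mul_sum]
        ring
    _ = ∑ v ∈ Q.support, coeff v Q * ∫ w, evalC (monomial v 1) w ∂μ :=
        Finset.sum_congr rfl fun v hvmem => by
          rw [key_monomial hd μ hμ v (le_trans (le_totalDegree hvmem) hQ)]
    _ = ∫ w, evalC Q w ∂μ := by
        simp_rw [← integral_const_mul]
        rw [← integral_finset_sum _ (fun v _ => ((integrable_evalC μ _).const_mul _))]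
        refine integral_congr_ae (Filter.EventuallyEq.of_eq (funext fun w => ?_))
        exact (hdec w).symm
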